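/- arXiv:2304.14676 — 4 statements merged into one kernel-verified Lean document; each statement's English description precedes it below -/
import Mathlib

section
/- The N×N Cauchy-Vandermonde matrix CSA^q_{N,L}(α,f), whose first L columns have (i,j) entry 1/(f_j − α_i) and whose remaining N−L columns have (i,j) entry α_i^{j-1}, is invertible whenever α_1,...,α_N, f_1,...,f_L are N+L pairwise distinct elements of F_q. -/
open Matrix

/-- The Cauchy–Vandermonde matrix of CSA schemes: first `L` columns have entries
`1/(f j - α i)`, remaining `N - L` columns have entries `α i ^ (j - L)`. -/
def CSAMatrixCV {F : Type*} [Field F] (N L : ℕ) (α : Fin N → F) (f : Fin L → F) :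
    Matrix (Fin N) (Fin N) F :=
  Matrix.of fun i j =>
    if h : (j : ℕ) < L then (f ⟨j, h⟩ - α i)⁻¹ else α i ^ ((j : ℕ) - L)

open Polynomial Finset in
theorem csa_invertible {F : Type*} [Field F] [Fintype F] (N L : ℕ) (hL : L ≤ N)
    (hq : N + L ≤ Fintype.card F) (α : Fin N → F) (f : Fin L → F)
    (hdist : Function.Injective (Sum.elim α f)) :
    IsUnit (CSAMatrixCV N L α f) := by
  classical
  rcases Nat.eq_zero_or_pos N with hN | hN
  · subst hN
    rw [Matrix.isUnit_iff_isUnit_det]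
    simp [Matrix.det_fin_zero]
  rw [Matrix.isUnit_iff_isUnit_det, isUnit_iff_ne_zero]
  intro hdet
  obtain ⟨c, hc0, hc⟩ := Matrix.exists_mulVec_eq_zero_iff.mpr hdet
  -- basic injectivity facts
  have hα : Function.Injective α := by
    intro i j h
    have := hdist (a₁ := Sum.inl i) (a₂ := Sum.inl j) (by simpa using h)
    simpa using this
  have hf : Function.Injective f := by
    intro i j h
    have := hdist (a₁ := Sum.inr i) (a₂ := Sum.inr j) (by simpa using h)
    simpa using this
  have hαf : ∀ i j, f j - α i ≠ 0 := by
    intro i j h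
    have := hdist (a₁ := Sum.inr j) (a₂ := Sum.inl i) (by simpa using sub_eq_zero.mp h)
    simp at this
  set d : Fin N → F := fun i => ∏ k, (f k - α i) with hd
  have hdne : ∀ i, d i ≠ 0 := fun i => Finset.prod_ne_zero_iff.mpr fun k _ => hαf i k
  set G : Polynomial F := ∏ k, (Polynomial.C (f k) - Polynomial.X) with hG
  have hGdeg : G.natDegree ≤ L := by
    refine (Polynomial.natDegree_prod_le _ _).trans ?_
    calc ∑ k : Fin L, (Polynomial.C (f k) - Polynomial.X).natDegree
        ≤ ∑ _k : Fin L, 1 := by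
          refine Finset.sum_le_sum fun k _ => ?_
          rw [show Polynomial.C (f k) - Polynomial.X = -(Polynomial.X - Polynomial.C (f k)) by ring,
            Polynomial.natDegree_neg, Polynomial.natDegree_X_sub_C]
      _ = L := by simp
  have hGne : G ≠ 0 := by
    refine Finset.prod_ne_zero_iff.mpr fun k _ h => ?_
    apply Polynomial.X_sub_C_ne_zero (f k)
    rw [show Polynomial.X - Polynomial.C (f k) = -(Polynomial.C (f k) - Polynomial.X) by ring, h,
      neg_zero]
  set p : Fin N → Polynomial F := fun j =>
    if h : (j : ℕ) < L then
      ∏ k ∈ Finset.univ.erase ⟨j, h⟩, (Polynomial.C (f k) - Polynomial.X)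
    else Polynomial.X ^ ((j : ℕ) - L) * G with hp
  have hpdeg : ∀ j, (p j).natDegree < N := by
    intro j
    simp only [hp]
    by_cases h : (j : ℕ) < L
    · rw [dif_pos h]
      have h1 : (∏ k ∈ Finset.univ.erase (⟨j, h⟩ : Fin L),
          (Polynomial.C (f k) - Polynomial.X)).natDegree ≤ (Finset.univ.erase (⟨j, h⟩ : Fin L)).card := by
        refine (Polynomial.natDegree_prod_le _ _).trans ?_
        calc ∑ k ∈ Finset.univ.erase (⟨j, h⟩ : Fin L), (Polynomial.C (f k) - Polynomial.X).natDegree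
            ≤ ∑ _k ∈ Finset.univ.erase (⟨j, h⟩ : Fin L), 1 := by
              refine Finset.sum_le_sum fun k _ => ?_
              rw [show Polynomial.C (f k) - Polynomial.X = -(Polynomial.X - Polynomial.C (f k)) by ring,
                Polynomial.natDegree_neg, Polynomial.natDegree_X_sub_C]
          _ = (Finset.univ.erase (⟨j, h⟩ : Fin L)).card := by simp
      have h2 : (Finset.univ.erase (⟨j, h⟩ : Fin L)).card = L - 1 := by
        rw [Finset.card_erase_of_mem (Finset.mem_univ _)]
        simp
      omega
    · rw [dif_neg h]
      have := j.isLt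
      have h1 : (Polynomial.X ^ ((j : ℕ) - L) * G).natDegree ≤ ((j : ℕ) - L) + L :=
        (Polynomial.natDegree_mul_le).trans
          (by rw [Polynomial.natDegree_X_pow]; omega)
      omega
  have hpd : ∀ i j, (p j).eval (α i) = d i * CSAMatrixCV N L α f i j := by
    intro i j
    by_cases h : (j : ℕ) < L
    · simp only [hp, dif_pos h]
      rw [Polynomial.eval_prod]
      simp only [Polynomial.eval_sub, Polynomial.eval_C, Polynomial.eval_X]
      have hmul : (f ⟨j, h⟩ - α i) * ∏ k ∈ Finset.univ.erase (⟨j, h⟩ : Fin L), (f k - α i)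
          = ∏ k, (f k - α i) :=
        Finset.mul_prod_erase Finset.univ (fun k => f k - α i) (Finset.mem_univ (⟨j, h⟩ : Fin L))
      have hCSA : CSAMatrixCV N L α f i j = (f ⟨j, h⟩ - α i)⁻¹ := by
        simp [CSAMatrixCV, h]
      rw [hCSA]
      simp only [hd]
      rw [← hmul, mul_comm (f ⟨j, h⟩ - α i), mul_inv_cancel_right₀ (hαf i ⟨j, h⟩)]
    · simp only [hp, dif_neg h]
      have hCSA : CSAMatrixCV N L α f i j = α i ^ ((j : ℕ) - L) := by
        simp [CSAMatrixCV, h]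
      rw [hCSA, Polynomial.eval_mul, Polynomial.eval_pow, Polynomial.eval_X, hG,
        Polynomial.eval_prod]
      simp only [Polynomial.eval_sub, Polynomial.eval_C, Polynomial.eval_X, hd]
      ring
  set P : Polynomial F := ∑ j, Polynomial.C (c j) * p j with hPdef
  have hPeval : ∀ i, P.eval (α i) = 0 := by
    intro i
    have h0 : (CSAMatrixCV N L α f).mulVec c i = 0 := congrFun hc i
    rw [Matrix.mulVec, dotProduct] at h0
    calc P.eval (α i) = ∑ j, c j * ((p j).eval (α i)) := by
          rw [hPdef, Polynomial.eval_finset_sum]; simp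
      _ = d i * ∑ j, CSAMatrixCV N L α f i j * c j := by
          rw [Finset.mul_sum]
          refine Finset.sum_congr rfl fun j _ => ?_
          rw [hpd]; ring
      _ = 0 := by rw [h0, mul_zero]
  have hP : P = 0 := by
    refine Polynomial.eq_zero_of_natDegree_lt_card_of_eval_eq_zero P hα hPeval ?_
    rw [Fintype.card_fin]
    have : P.natDegree ≤ N - 1 := by
      refine Polynomial.natDegree_sum_le_of_forall_le _ _ fun j _ => ?_
      refine (Polynomial.natDegree_mul_le).trans ?_
      have := hpdeg j
      rw [Polynomial.natDegree_C]
      omega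
    omega
  -- step 1: the Cauchy coefficients vanish
  have hclow : ∀ (j : Fin L), c ⟨j, lt_of_lt_of_le j.isLt hL⟩ = 0 := by
    intro j
    set j0 : Fin N := ⟨j, lt_of_lt_of_le j.isLt hL⟩ with hj0
    have h1 : P.eval (f j) = 0 := by rw [hP]; simp
    have key : ∀ j' : Fin N, j' ∈ Finset.univ → j' ≠ j0 →
        Polynomial.eval (f j) (Polynomial.C (c j') * p j') = 0 := by
      intro j' _ hne
      rw [Polynomial.eval_mul]
      simp only [hp]
      by_cases h : (j' : ℕ) < L
      · rw [dif_pos h, Polynomial.eval_prod]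
        have hjm : j ∈ Finset.univ.erase (⟨j', h⟩ : Fin L) := by
          refine Finset.mem_erase.mpr ⟨?_, Finset.mem_univ _⟩
          intro hcon
          apply hne
          rw [hj0]
          apply Fin.ext
          simpa using congrArg (Fin.val) hcon.symm
        rw [Finset.prod_eq_zero hjm (by simp), mul_zero]
      · rw [dif_neg h, Polynomial.eval_mul, hG, Polynomial.eval_prod,
          Finset.prod_eq_zero (Finset.mem_univ j) (by simp), mul_zero, mul_zero]
    have h2 : P.eval (f j) = c j0 * ((p j0).eval (f j)) := by
      rw [hPdef, Polynomial.eval_finset_sum]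
      rw [Finset.sum_eq_single j0 key (by simp)]
      simp
    have hj0L : (j0 : ℕ) < L := j.isLt
    have h3 : (p j0).eval (f j) ≠ 0 := by
      simp only [hp, dif_pos hj0L]
      rw [Polynomial.eval_prod]
      refine Finset.prod_ne_zero_iff.mpr fun k hk => ?_
      simp only [Polynomial.eval_sub, Polynomial.eval_C, Polynomial.eval_X]
      intro hcon
      have hkj : k = j := hf (sub_eq_zero.mp hcon)
      have : (⟨(j0 : ℕ), hj0L⟩ : Fin L) = j := Fin.ext rfl
      rw [Finset.mem_erase] at hk
      exact hk.1 (hkj.trans this.symm)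
    have := h2.symm.trans h1
    rcases mul_eq_zero.mp this with h | h
    · exact h
    · exact absurd h h3
  -- step 2: the Vandermonde coefficients vanish
  set Q : Polynomial F := ∑ j ∈ Finset.univ.filter (fun j : Fin N => L ≤ (j : ℕ)),
    Polynomial.C (c j) * Polynomial.X ^ ((j : ℕ) - L) with hQdef
  have hPQ : P = Q * G := by
    rw [hQdef, Finset.sum_mul, hPdef]
    rw [← Finset.sum_filter_of_ne (p := fun j : Fin N => L ≤ (j : ℕ))
      (f := fun j => Polynomial.C (c j) * p j) ?_]
    · refine Finset.sum_congr rfl fun j hj => ?_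
      rw [Finset.mem_filter] at hj
      obtain ⟨-, hj2⟩ := hj
      simp only [hp]
      rw [dif_neg (by omega), mul_assoc]
    · intro j _ hne
      by_contra hcon
      push_neg at hcon
      apply hne
      have : c j = 0 := by
        have := hclow ⟨(j : ℕ), hcon⟩
        simpa using this
      simp only [this, map_zero, zero_mul]
  have hQ : Q = 0 := by
    rcases mul_eq_zero.mp (hP.symm.trans hPQ).symm with h | h
    · exact h
    · exact absurd h hGne
  have hchigh : ∀ j : Fin N, L ≤ (j : ℕ) → c j = 0 := by
    intro j hj
    have hcoeff : Q.coeff ((j : ℕ) - L) = 0 := by rw [hQ]; simp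
    rw [hQdef, Polynomial.finset_sum_coeff] at hcoeff
    rw [Finset.sum_eq_single j ?_ ?_] at hcoeff
    · simpa using hcoeff
    · intro j' hj' hne
      rw [Finset.mem_filter] at hj'
      rw [Polynomial.coeff_C_mul, Polynomial.coeff_X_pow, if_neg, mul_zero]
      intro hcon
      apply hne
      apply Fin.ext
      have := j.isLt
      have := j'.isLt
      omega
    · intro hcon
      exact absurd (Finset.mem_filter.mpr ⟨Finset.mem_univ j, hj⟩) hcon
  -- conclude c = 0, contradiction
  apply hc0
  funext j
  by_cases h : (j : ℕ) < L
  · have := hclow ⟨(j : ℕ), h⟩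
    simpa using this
  · exact hchigh j (le_of_not_gt h)
end

section
/- Let G be the 2N×N block-diagonal matrix with upper-left block GRS^q_{N,⌈N/2⌉}(α,u) and lower-right block GRS^q_{N,⌊N/2⌋}(α,v), where v_j = u_j^{-1}·(∏_{i≠j}(α_j − α_i))^{-1}. Then GᵀJG = 0, where J = [[0, −I_N],[I_N, 0]]. -/
open Matrix

/-- Generator matrix of a Generalized Reed-Solomon code: entry (i,j) is `w i * (α i)^j`. -/
def GRS {F : Type*} [Field F] (n k : ℕ) (α w : Fin n → F) : Matrix (Fin n) (Fin k) F :=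
  Matrix.of fun i j => w i * α i ^ (j : ℕ)

section Aux
open Polynomial Finset

lemma lagrange_sum_zero {F : Type*} [Field F] {N : ℕ} (α : Fin N → F)
    (hα : Function.Injective α) {m : ℕ} (hm : m + 1 < N) :
    ∑ i, (∏ k ∈ Finset.univ.erase i, (α i - α k))⁻¹ * α i ^ m = 0 := by
  classical
  have hinj : Set.InjOn α (Finset.univ : Finset (Fin N)) := hα.injOn
  have hcard : (Finset.univ : Finset (Fin N)).card = N := by simp
  have hdegX : (X ^ m : F[X]).degree < (Finset.univ : Finset (Fin N)).card := by
    rw [degree_X_pow, hcard]; exact_mod_cast Nat.lt_of_succ_lt hm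
  have hX : (X ^ m : F[X]) =
      Lagrange.interpolate Finset.univ α (fun i => α i ^ m) := by
    have h := Lagrange.eq_interpolate (f := (X ^ m : F[X])) hinj hdegX
    simpa using h
  have hbasis : ∀ i : Fin N, (Lagrange.basis Finset.univ α i).coeff (N - 1) =
      (∏ k ∈ Finset.univ.erase i, (α i - α k))⁻¹ := by
    intro i
    have hdeg : (Lagrange.basis Finset.univ α i).degree = (N - 1 : ℕ) := by
      simpa [hcard] using Lagrange.degree_basis hinj (Finset.mem_univ i)
    have hnat : (Lagrange.basis Finset.univ α i).natDegree = N - 1 :=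
      natDegree_eq_of_degree_eq_some hdeg
    have hlc : (Lagrange.basis Finset.univ α i).leadingCoeff =
        ∏ k ∈ Finset.univ.erase i, (α i - α k)⁻¹ := by
      rw [Lagrange.basis, leadingCoeff_prod]
      refine Finset.prod_congr rfl fun k hk => ?_
      have hik : α i ≠ α k := fun h => (Finset.mem_erase.mp hk).1 (hα h).symm
      rw [Lagrange.basisDivisor, leadingCoeff_mul, leadingCoeff_C,
        leadingCoeff_X_sub_C, mul_one]
    rw [← hnat, Polynomial.coeff_natDegree, hlc, ← Finset.prod_inv_distrib]
  have hco := congrArg (fun p : F[X] => p.coeff (N - 1)) hX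
  simp only [coeff_X_pow, Lagrange.interpolate_apply, finset_sum_coeff, coeff_C_mul] at hco
  have hne : N - 1 ≠ m := by omega
  rw [if_neg hne] at hco
  rw [show (∑ i : Fin N, (∏ k ∈ Finset.univ.erase i, (α i - α k))⁻¹ * α i ^ m)
      = ∑ x : Fin N, α x ^ m * (Lagrange.basis Finset.univ α x).coeff (N - 1) from
    Finset.sum_congr rfl fun i _ => by rw [hbasis i, mul_comm], ← hco]

end Aux

theorem qcsa_G_self_orthogonal {F : Type*} [Field F] [Fintype F] (N : ℕ) (hN : 1 ≤ N)
    (α u v : Fin N → F) (hα : Function.Injective α) (hu : ∀ i, u i ≠ 0)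
    (hv : ∀ j, v j = (u j)⁻¹ * (∏ i ∈ Finset.univ.erase j, (α j - α i))⁻¹)
    (G : Matrix (Fin N ⊕ Fin N) (Fin ((N + 1) / 2) ⊕ Fin (N / 2)) F)
    (hG : G = Matrix.fromBlocks (GRS N ((N + 1) / 2) α u) 0 0 (GRS N (N / 2) α v))
    (J : Matrix (Fin N ⊕ Fin N) (Fin N ⊕ Fin N) F)
    (hJ : J = Matrix.fromBlocks 0 (-1) 1 0) :
    Gᵀ * J * G = 0 := by
  have key : ∀ (j : Fin ((N + 1) / 2)) (l : Fin (N / 2)),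
      ∑ i, (u i * α i ^ (j : ℕ)) * (v i * α i ^ (l : ℕ)) = 0 := by
    intro j l
    have h : ∀ i, (u i * α i ^ (j : ℕ)) * (v i * α i ^ (l : ℕ)) =
        (∏ k ∈ Finset.univ.erase i, (α i - α k))⁻¹ * α i ^ ((j : ℕ) + (l : ℕ)) := by
      intro i
      rw [hv i, pow_add]
      have h1 : (u i * α i ^ (j : ℕ)) *
          (((u i)⁻¹ * (∏ k ∈ Finset.univ.erase i, (α i - α k))⁻¹) * α i ^ (l : ℕ)) =
          (u i * (u i)⁻¹) *
            ((∏ k ∈ Finset.univ.erase i, (α i - α k))⁻¹ * (α i ^ (j : ℕ) * α i ^ (l : ℕ))) := by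
        ring
      rw [h1, mul_inv_cancel₀ (hu i), one_mul]
    simp_rw [h]
    exact lagrange_sum_zero α hα (by omega)
  subst hG hJ
  rw [Matrix.fromBlocks_transpose, Matrix.fromBlocks_multiply, Matrix.fromBlocks_multiply]
  have hAB : (GRS N ((N + 1) / 2) α u)ᵀ * (GRS N (N / 2) α v) = 0 := by
    ext j l
    simpa [Matrix.mul_apply, GRS] using key j l
  have hBA : (GRS N (N / 2) α v)ᵀ * (GRS N ((N + 1) / 2) α u) = 0 := by
    ext l j
    have := key j l
    simp only [Matrix.mul_apply, GRS, Matrix.transpose_apply, Matrix.of_apply,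
      Matrix.zero_apply]
    rw [← this]
    exact Finset.sum_congr rfl fun i _ => by ring
  simp [hAB, hBA, Matrix.mul_assoc]
end

section
/- For 2L ≤ N, if the classical CSA scheme recovers L desired symbols per N downloaded dits (rate L/N), then the quantum CSA scheme recovers 2L desired symbols per N downloaded qudits, achieving rate 2L/N = 2·(L/N): formally, applying the N×2N matrix M_Q to the stacked scaled answer vector [Diag(u)·CSA·x(1); Diag(v)·CSA·x(2)] yields a vector containing all entries δ_1(1),...,δ_L(1) and δ_1(2),...,δ_L(2) of the two desired-symbol blocks. -/
open Matrix Polynomial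

/-- The Cauchy–Vandermonde matrix of CSA schemes. -/
def CSAq {F : Type*} [Field F] (N L : ℕ) (α : Fin N → F) (f : Fin L → F) :
    Matrix (Fin N) (Fin N) F :=
  Matrix.of fun i j =>
    if h : (j : ℕ) < L then (f ⟨j, h⟩ - α i)⁻¹ else α i ^ ((j : ℕ) - L)

/-- The N×2N selection matrix of the QCSA scheme. -/
def selMat (F : Type*) [Field F] (N L : ℕ) : Matrix (Fin N) (Fin N ⊕ Fin N) F :=
  Matrix.of fun i j =>
    match j with
    | Sum.inl j' =>
        if ((i : ℕ) < L ∧ (j' : ℕ) = (i : ℕ)) ∨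
           (L ≤ (i : ℕ) ∧ (i : ℕ) < N / 2 ∧ (j' : ℕ) = (i : ℕ) + (N + 1) / 2) then 1 else 0
    | Sum.inr j' =>
        if (N / 2 ≤ (i : ℕ) ∧ (i : ℕ) < N / 2 + L ∧ (j' : ℕ) = (i : ℕ) - N / 2) ∨
           (N / 2 + L ≤ (i : ℕ) ∧ (j' : ℕ) = (i : ℕ)) then 1 else 0

lemma pi_isUnit {F : Type*} [Field F] {N : ℕ} {w : Fin N → F} (hw : ∀ i, w i ≠ 0) :
    IsUnit w :=
  ⟨⟨w, fun i => (w i)⁻¹, funext fun i => mul_inv_cancel₀ (hw i),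
    funext fun i => inv_mul_cancel₀ (hw i)⟩, rfl⟩

lemma csa_ker {F : Type*} [Field F] {N L : ℕ} (hN : 1 ≤ N) (h2L : 2 * L ≤ N)
    (α : Fin N → F) (f : Fin L → F) (hdist : Function.Injective (Sum.elim α f))
    (x : Fin N → F) (hx : CSAq N L α f *ᵥ x = 0) : x = 0 := by
  classical
  have hLN : L ≤ N := by omega
  have hα : Function.Injective α := fun i j h => by
    have := hdist (a₁ := Sum.inl i) (a₂ := Sum.inl j) (by simpa using h)
    simpa using this
  have hf : Function.Injective f := fun i j h => by
    have := hdist (a₁ := Sum.inr i) (a₂ := Sum.inr j) (by simpa using h)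
    simpa using this
  have hαf : ∀ (i : Fin N) (k : Fin L), f k - α i ≠ 0 := by
    intro i k h
    have : Sum.elim α f (Sum.inr k) = Sum.elim α f (Sum.inl i) := by
      simpa using sub_eq_zero.mp h
    exact absurd (hdist this) (by simp)
  set Q : F[X] := ∏ k : Fin L, (C (f k) - X) with hQ
  set R : F[X] := ∑ j : Fin N, if L ≤ (j : ℕ) then C (x j) * X ^ ((j : ℕ) - L) else 0 with hR
  set P : F[X] :=
    (∑ j : Fin N, C (x j) *
      (if h : (j : ℕ) < L then ∏ k ∈ Finset.univ.erase (⟨j, h⟩ : Fin L), (C (f k) - X) else 0))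
      + R * Q with hP
  have hdeg1 : ∀ c : F, (C c - X).natDegree = 1 := fun c => by
    rw [← neg_sub, natDegree_neg, natDegree_X_sub_C]
  have hQe : ∀ a : F, Q.eval a = ∏ k : Fin L, (f k - a) := by
    intro a; simp [hQ, eval_prod]
  have heval : ∀ i : Fin N, P.eval (α i) = 0 := by
    intro i
    have h0 : (CSAq N L α f *ᵥ x) i = 0 := by rw [hx]; rfl
    have : P.eval (α i) = Q.eval (α i) * (CSAq N L α f *ᵥ x) i := by
      rw [mulVec, dotProduct, Finset.mul_sum, hP]
      rw [eval_add, eval_mul, eval_finset_sum, eval_finset_sum, Finset.sum_mul,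
        ← Finset.sum_add_distrib]
      refine Finset.sum_congr rfl fun j _ => ?_
      by_cases h : (j : ℕ) < L
      · rw [dif_pos h]
        simp only [CSAq, Matrix.of_apply, dif_pos h]
        rw [hQe, ← Finset.mul_prod_erase Finset.univ _ (Finset.mem_univ (⟨j, h⟩ : Fin L))]
        have hne := hαf i ⟨j, h⟩
        simp only [eval_mul, eval_C, eval_prod, eval_sub, eval_X, if_neg (not_le.mpr h),
          eval_zero, zero_mul, add_zero]
        field_simp
      · rw [dif_neg h]
        simp only [CSAq, Matrix.of_apply, dif_neg h, if_pos (not_lt.mp h)]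
        simp only [eval_mul, eval_C, eval_pow, eval_X, eval_zero, mul_zero, zero_mul, zero_add]
        ring
    rw [this, h0, mul_zero]
  have hdegP : P.natDegree < N := by
    have hd1 : (∑ j : Fin N, C (x j) *
        (if h : (j : ℕ) < L then ∏ k ∈ Finset.univ.erase (⟨j, h⟩ : Fin L), (C (f k) - X)
          else 0)).natDegree ≤ N - 1 := by
      refine natDegree_sum_le_of_forall_le _ _ fun j _ => ?_
      refine (natDegree_mul_le).trans ?_
      rw [natDegree_C, zero_add]
      by_cases h : (j : ℕ) < L
      · rw [dif_pos h]
        refine (natDegree_prod_le _ _).trans ?_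
        have hc1 : ∀ k ∈ Finset.univ.erase (⟨j, h⟩ : Fin L), (C (f k) - X).natDegree = 1 :=
          fun k _ => hdeg1 _
        rw [Finset.sum_congr rfl hc1, Finset.sum_const, smul_eq_mul, mul_one,
          Finset.card_erase_of_mem (Finset.mem_univ _), Finset.card_univ, Fintype.card_fin]
        omega
      · rw [dif_neg h]; simp
    have hdR : R.natDegree ≤ N - 1 - L := by
      refine natDegree_sum_le_of_forall_le _ _ fun j _ => ?_
      by_cases h : L ≤ (j : ℕ)
      · rw [if_pos h]
        refine (natDegree_mul_le).trans ?_
        rw [natDegree_C, zero_add]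
        refine (natDegree_X_pow_le _).trans ?_
        have := j.isLt; omega
      · rw [if_neg h]; simp
    have hdQ : Q.natDegree ≤ L := by
      refine (natDegree_prod_le _ _).trans ?_
      calc ∑ k : Fin L, (C (f k) - X).natDegree = ∑ _k : Fin L, 1 :=
            Finset.sum_congr rfl fun k _ => hdeg1 _
        _ ≤ L := by simp
    have : P.natDegree ≤ N - 1 := by
      refine (natDegree_add_le _ _).trans (max_le hd1 ?_)
      refine (natDegree_mul_le).trans ?_
      omega
    omega
  have hP0 : P = 0 := by
    refine eq_zero_of_natDegree_lt_card_of_eval_eq_zero P hα heval ?_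
    simpa using hdegP
  -- step: x j = 0 for j < L
  have hxL : ∀ (j : Fin N) (h : (j : ℕ) < L), x j = 0 := by
    intro j h
    have hev : P.eval (f ⟨j, h⟩) = 0 := by rw [hP0]; simp
    have hQ0 : Q.eval (f ⟨j, h⟩) = 0 := by
      rw [hQe]
      exact Finset.prod_eq_zero (Finset.mem_univ (⟨j, h⟩ : Fin L)) (by simp)
    rw [hP, eval_add, eval_mul, hQ0, mul_zero, add_zero, eval_finset_sum] at hev
    rw [Finset.sum_eq_single j ?_ (by simp)] at hev
    · rw [dif_pos h] at hev
      simp only [eval_mul, eval_C, eval_prod, eval_sub, eval_X] at hev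
      have hpne : ∏ k ∈ Finset.univ.erase (⟨j, h⟩ : Fin L), (f k - f ⟨j, h⟩) ≠ 0 := by
        refine Finset.prod_ne_zero_iff.mpr fun k hk => ?_
        have : k ≠ ⟨j, h⟩ := Finset.ne_of_mem_erase hk
        exact sub_ne_zero.mpr fun hc => this (hf hc)
      exact (mul_eq_zero.mp hev).resolve_right hpne
    · intro b _ hbj
      by_cases hb : (b : ℕ) < L
      · rw [dif_pos hb]
        simp only [eval_mul, eval_C, eval_prod, eval_sub, eval_X]
        have hmem : (⟨j, h⟩ : Fin L) ∈ Finset.univ.erase (⟨b, hb⟩ : Fin L) := by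
          refine Finset.mem_erase.mpr ⟨?_, Finset.mem_univ _⟩
          intro hc
          have hv : (j : ℕ) = (b : ℕ) := by simpa using hc
          exact hbj (Fin.ext hv.symm)
        rw [Finset.prod_eq_zero hmem (by simp), mul_zero]
      · rw [dif_neg hb]; simp
  -- step: R = 0
  have hsum0 : (∑ j : Fin N, C (x j) *
      (if h : (j : ℕ) < L then ∏ k ∈ Finset.univ.erase (⟨j, h⟩ : Fin L), (C (f k) - X)
        else 0)) = 0 := by
    refine Finset.sum_eq_zero fun j _ => ?_
    by_cases h : (j : ℕ) < L
    · rw [hxL j h]; simp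
    · rw [dif_neg h]; simp
  have hQne : Q ≠ 0 := by
    rw [hQ]
    refine Finset.prod_ne_zero_iff.mpr fun k _ => ?_
    intro hc
    have := hdeg1 (f k)
    rw [hc] at this; simp at this
  have hR0 : R = 0 := by
    have : R * Q = 0 := by
      have := hP0
      rw [hP, hsum0, zero_add] at this
      exact this
    exact (mul_eq_zero.mp this).resolve_right hQne
  have hxU : ∀ (j : Fin N), L ≤ (j : ℕ) → x j = 0 := by
    intro j hj
    have : R.coeff ((j : ℕ) - L) = 0 := by rw [hR0]; simp
    rw [hR, finset_sum_coeff] at this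
    rw [Finset.sum_eq_single j ?_ (by simp)] at this
    · rw [if_pos hj, coeff_C_mul, coeff_X_pow, if_pos rfl, mul_one] at this
      exact this
    · intro b _ hbj
      by_cases hb : L ≤ (b : ℕ)
      · rw [if_pos hb, coeff_C_mul, coeff_X_pow]
        rw [if_neg, mul_zero]
        intro hc
        exact hbj (Fin.ext (by omega))
      · rw [if_neg hb]; simp
  funext j
  by_cases h : (j : ℕ) < L
  · exact hxL j h
  · exact hxU j (not_lt.mp h)

lemma csa_isUnit {F : Type*} [Field F] {N L : ℕ} (hN : 1 ≤ N) (h2L : 2 * L ≤ N)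
    (α : Fin N → F) (f : Fin L → F) (hdist : Function.Injective (Sum.elim α f)) :
    IsUnit (CSAq N L α f) := by
  rw [← Matrix.mulVec_injective_iff_isUnit]
  intro y z h
  have h0 : CSAq N L α f *ᵥ (y - z) = 0 := by
    rw [Matrix.mulVec_sub, h, sub_self]
  have := csa_ker hN h2L α f hdist _ h0
  exact sub_eq_zero.mp this

/-- The quantum CSA scheme recovers the `2L` desired symbols (the first `L` entries of each
of the two instances) from the `N` outputs of the N-sum box, i.e., rate `2L/N`. -/
theorem qcsa_scheme_rate {F : Type*} [Field F] [Fintype F] (N L : ℕ) (hN : 1 ≤ N)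
    (h2L : 2 * L ≤ N) (hq : N + L ≤ Fintype.card F)
    (α : Fin N → F) (f : Fin L → F) (hdist : Function.Injective (Sum.elim α f))
    (u v : Fin N → F) (hu : ∀ i, u i ≠ 0)
    (hv : ∀ j, v j = (u j)⁻¹ * (∏ i ∈ Finset.univ.erase j, (α j - α i))⁻¹)
    (x1 x2 : Fin N → F)
    (a : (Fin N ⊕ Fin N) → F)
    (ha : a = Sum.elim (fun n => u n * (CSAq N L α f *ᵥ x1) n)
                       (fun n => v n * (CSAq N L α f *ᵥ x2) n))
    (MQ : Matrix (Fin N) (Fin N ⊕ Fin N) F)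
    (hMQ : MQ = selMat F N L *
      (Matrix.fromBlocks (Matrix.diagonal u * CSAq N L α f) 0 0
        (Matrix.diagonal v * CSAq N L α f))⁻¹) :
    (∀ l : Fin N, (l : ℕ) < L → (MQ *ᵥ a) l = x1 l) ∧
    (∀ l : Fin N, N / 2 ≤ (l : ℕ) → (l : ℕ) < N / 2 + L →
      ∀ h : (l : ℕ) - N / 2 < N, (MQ *ᵥ a) l = x2 ⟨(l : ℕ) - N / 2, h⟩) := by
  classical
  have hα : Function.Injective α := fun i j h => by
    have := hdist (a₁ := Sum.inl i) (a₂ := Sum.inl j) (by simpa using h)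
    simpa using this
  have hCSA : IsUnit (CSAq N L α f) := csa_isUnit hN h2L α f hdist
  have hvne : ∀ j, v j ≠ 0 := by
    intro j
    rw [hv j]
    refine mul_ne_zero (inv_ne_zero (hu j)) (inv_ne_zero ?_)
    refine Finset.prod_ne_zero_iff.mpr fun i hi => sub_ne_zero.mpr fun hc => ?_
    exact (Finset.ne_of_mem_erase hi) (hα hc.symm)
  have hA : IsUnit (Matrix.diagonal u * CSAq N L α f) :=
    (Matrix.isUnit_diagonal.mpr (pi_isUnit hu)).mul hCSA
  have hD : IsUnit (Matrix.diagonal v * CSAq N L α f) :=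
    (Matrix.isUnit_diagonal.mpr (pi_isUnit hvne)).mul hCSA
  set B := Matrix.fromBlocks (Matrix.diagonal u * CSAq N L α f) 0 0
    (Matrix.diagonal v * CSAq N L α f) with hB
  have hBunit : IsUnit B := Matrix.isUnit_fromBlocks_zero₂₁.mpr ⟨hA, hD⟩
  have hBinv : B⁻¹ * B = 1 := Matrix.nonsing_inv_mul B (B.isUnit_iff_isUnit_det.mp hBunit)
  have hay : a = B *ᵥ Sum.elim x1 x2 := by
    rw [ha, hB, Matrix.fromBlocks_mulVec]
    funext s
    cases s with
    | inl n =>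
        simp [← Matrix.mulVec_mulVec, Matrix.mulVec_diagonal]
    | inr n =>
        simp [← Matrix.mulVec_mulVec, Matrix.mulVec_diagonal]
  have key : MQ *ᵥ a = selMat F N L *ᵥ Sum.elim x1 x2 := by
    rw [hMQ, hay, ← Matrix.mulVec_mulVec, Matrix.mulVec_mulVec (Sum.elim x1 x2) B⁻¹ B,
      hBinv, Matrix.one_mulVec]
  have hsel : ∀ l : Fin N, (selMat F N L *ᵥ Sum.elim x1 x2) l =
      (∑ b : Fin N, selMat F N L l (Sum.inl b) * x1 b) +
      (∑ b : Fin N, selMat F N L l (Sum.inr b) * x2 b) := by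
    intro l
    rw [Matrix.mulVec, dotProduct, Fintype.sum_sum_type]
    simp
  have hL2 : L ≤ N / 2 := by omega
  constructor
  · intro l hl
    rw [key, hsel]
    have h1 : (∑ b : Fin N, selMat F N L l (Sum.inl b) * x1 b) = x1 l := by
      rw [Finset.sum_eq_single l]
      · have : selMat F N L l (Sum.inl l) = 1 := by
          simp only [selMat, Matrix.of_apply]
          rw [if_pos (Or.inl ⟨hl, trivial⟩)]
        rw [this, one_mul]
      · intro b _ hbl
        have : selMat F N L l (Sum.inl b) = 0 := by
          simp only [selMat, Matrix.of_apply]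
          rw [if_neg]
          rintro (⟨_, hb⟩ | ⟨hLl, _⟩)
          · exact hbl (Fin.ext hb)
          · omega
        rw [this, zero_mul]
      · intro h; exact absurd (Finset.mem_univ l) h
    have h2 : (∑ b : Fin N, selMat F N L l (Sum.inr b) * x2 b) = 0 := by
      refine Finset.sum_eq_zero fun b _ => ?_
      have : selMat F N L l (Sum.inr b) = 0 := by
        simp only [selMat, Matrix.of_apply]
        rw [if_neg]
        rintro (⟨h1, _, _⟩ | ⟨h1, _⟩) <;> omega
      rw [this, zero_mul]
    rw [h1, h2, add_zero]
  · intro l hl1 hl2 h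
    rw [key, hsel]
    have h1 : (∑ b : Fin N, selMat F N L l (Sum.inl b) * x1 b) = 0 := by
      refine Finset.sum_eq_zero fun b _ => ?_
      have : selMat F N L l (Sum.inl b) = 0 := by
        simp only [selMat, Matrix.of_apply]
        rw [if_neg]
        rintro (⟨h1, _⟩ | ⟨_, h2, _⟩) <;> omega
      rw [this, zero_mul]
    have h2 : (∑ b : Fin N, selMat F N L l (Sum.inr b) * x2 b) =
        x2 ⟨(l : ℕ) - N / 2, h⟩ := by
      rw [Finset.sum_eq_single (⟨(l : ℕ) - N / 2, h⟩ : Fin N)]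
      · have : selMat F N L l (Sum.inr ⟨(l : ℕ) - N / 2, h⟩) = 1 := by
          simp only [selMat, Matrix.of_apply]
          rw [if_pos (Or.inl ⟨hl1, hl2, trivial⟩)]
        rw [this, one_mul]
      · intro b _ hbl
        have : selMat F N L l (Sum.inr b) = 0 := by
          simp only [selMat, Matrix.of_apply]
          rw [if_neg]
          rintro (⟨_, _, hb⟩ | ⟨h1, _⟩)
          · exact hbl (Fin.ext hb)
          · omega
        rw [this, zero_mul]
      · intro hmem; exact absurd (Finset.mem_univ _) hmem
    rw [h1, h2, zero_add]
end

section
/- Let G, H ∈ F_q^{2N×N} with [G H] invertible and G SSO, and let M = [0_N I_N][G H]^{-1}. For any invertible N×N matrix T, the matrix G' = G·T is also SSO, [G' H] is invertible, and the resulting channel matrix M' = [0_N I_N][G' H]^{-1} equals M (the N-sum box channel matrix depends only on the column space of G). -/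
open Matrix

theorem channel_matrix_depends_only_on_colspace {F : Type*} [Field F] [Fintype F]
    (N : ℕ) (hN : 1 ≤ N)
    (G H : Matrix (Fin N ⊕ Fin N) (Fin N) F)
    (J : Matrix (Fin N ⊕ Fin N) (Fin N ⊕ Fin N) F)
    (hJ : J = Matrix.fromBlocks 0 (-1) 1 0)
    (hGH : IsUnit (Matrix.fromCols G H))
    (hrk : G.rank = N) (hsso : Gᵀ * J * G = 0)
    (M : Matrix (Fin N) (Fin N ⊕ Fin N) F)
    (hM : M = Matrix.fromCols (0 : Matrix (Fin N) (Fin N) F) 1 * (Matrix.fromCols G H)⁻¹)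
    (T : Matrix (Fin N) (Fin N) F) (hT : IsUnit T) :
    ((G * T).rank = N ∧ (G * T)ᵀ * J * (G * T) = 0) ∧
    IsUnit (Matrix.fromCols (G * T) H) ∧
    Matrix.fromCols (0 : Matrix (Fin N) (Fin N) F) 1 *
      (Matrix.fromCols (G * T) H)⁻¹ = M := by
  have hTdet : IsUnit T.det := (Matrix.isUnit_iff_isUnit_det T).mp hT
  have hB : Matrix.fromCols (G * T) H =
      Matrix.fromCols G H * Matrix.fromBlocks T 0 0 (1 : Matrix (Fin N) (Fin N) F) := by
    rw [Matrix.fromCols_mul_fromBlocks]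
    simp
  have hBunit : IsUnit (Matrix.fromBlocks T 0 0 (1 : Matrix (Fin N) (Fin N) F)) := by
    rw [Matrix.isUnit_iff_isUnit_det, Matrix.det_fromBlocks_zero₂₁]
    simpa using hTdet
  have hGTunit : IsUnit (Matrix.fromCols (G * T) H) := by
    rw [hB]; exact hGH.mul hBunit
  refine ⟨⟨?_, ?_⟩, hGTunit, ?_⟩
  · rw [Matrix.rank_mul_eq_left_of_isUnit_det _ _ hTdet, hrk]
  · have : (G * T)ᵀ * J * (G * T) = Tᵀ * (Gᵀ * J * G) * T := by
      simp only [Matrix.transpose_mul, Matrix.mul_assoc]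
    rw [this, hsso]
    simp
  · rw [hB, Matrix.mul_inv_rev]
    rw [hM]
    refine (Matrix.mul_assoc (Matrix.fromCols (0 : Matrix (Fin N) (Fin N) F) 1)
      (Matrix.fromBlocks T 0 0 (1 : Matrix (Fin N) (Fin N) F))⁻¹ (Matrix.fromCols G H)⁻¹).symm.trans
      (congrArg (· * (Matrix.fromCols G H)⁻¹) ?_)
    have key : Matrix.fromCols (0 : Matrix (Fin N) (Fin N) F) 1 *
        Matrix.fromBlocks T 0 0 (1 : Matrix (Fin N) (Fin N) F) =
        Matrix.fromCols (0 : Matrix (Fin N) (Fin N) F) 1 := by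
      refine (Matrix.fromCols_mul_fromBlocks _ _ _ _ _ _).trans ?_; simp
    conv_lhs => rw [← key]
    refine (Matrix.mul_assoc _ _ _).trans ?_
    rw [Matrix.mul_nonsing_inv _
      ((Matrix.isUnit_iff_isUnit_det _).mp hBunit), Matrix.mul_one]
end
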